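/- In LiP, proof extension is derivable: for all messages M, M', agent a, community C, and formula φ, the formula ((M :_{a,C} φ) ∨ (M' :_{a,C} φ)) → (⟨M,M'⟩ :_{a,C} φ) is a theorem of LiP. -/
import Mathlib


/-- Messages over agent names: names, signing, pairing. -/
inductive Msg (A : Type) : Type
  | name : A → Msg A
  | sign : Msg A → A → Msg A
  | pair : Msg A → Msg A → Msg A

/-- Formulas of LiP: atomic propositions, individual-knowledge atoms,
negation, conjunction, and the interactive proof modality `M :_{a,C} φ`. -/
inductive Fm (A : Type) : Type
  | atom : ℕ → Fm A
  | knows : A → Msg A → Fm A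
  | neg : Fm A → Fm A
  | and : Fm A → Fm A → Fm A
  | proves : Msg A → A → Finset A → Fm A → Fm A

namespace Fm

variable {A : Type}

/-- Disjunction macro. -/
def or (φ ψ : Fm A) : Fm A := neg (and (neg φ) (neg ψ))
/-- Implication macro. -/
def impl (φ ψ : Fm A) : Fm A := or (neg φ) ψ
/-- Biimplication macro. -/
def iff (φ ψ : Fm A) : Fm A := and (impl φ ψ) (impl ψ φ)

/-- Boolean evaluation treating knowledge atoms and proof-modality formulas
as propositional atoms. -/
def eval (v : Fm A → Bool) : Fm A → Bool
  | neg φ => !eval v φ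
  | and φ ψ => eval v φ && eval v ψ
  | φ => v φ

/-- Classical propositional tautology (with `knows`- and `proves`-formulas as atoms). -/
def Taut (φ : Fm A) : Prop := ∀ v : Fm A → Bool, eval v φ = true

/-- The Hilbert system LiP. -/
inductive LiP [DecidableEq A] : Fm A → Prop
  | taut {φ : Fm A} : Taut φ → LiP φ
  | knowsSelf (a : A) : LiP (knows a (Msg.name a))
  | signSynth (a : A) (M : Msg A) :
      LiP (impl (knows a M) (knows a (Msg.sign M a)))
  | signAnal (a b : A) (M : Msg A) :
      LiP (impl (knows a (Msg.sign M b)) (knows a (Msg.pair M (Msg.name b))))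
  | pairing (a : A) (M M' : Msg A) :
      LiP (iff (and (knows a M) (knows a M')) (knows a (Msg.pair M M')))
  | GK (M M' : Msg A) (a : A) (C : Finset A) (φ φ' : Fm A) :
      LiP (impl (proves M a C (impl φ φ'))
        (impl (proves M' a C φ) (proves (Msg.pair M M') a C φ')))
  | truthful (M : Msg A) (a : A) (C : Finset A) (φ : Fm A) :
      LiP (impl (proves M a C φ) (impl (knows a M) φ))
  | peer (M : Msg A) (a : A) (C : Finset A) (φ : Fm A) {b : A}
      (hb : b ∈ C ∪ {a}) :
      LiP (impl (proves M a C φ)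
        (proves (Msg.sign M a) b (C ∪ {a}) (and (knows a M) (proves M a C φ))))
  | groupDecomp (M : Msg A) (a : A) (C C' : Finset A) (φ : Fm A) :
      LiP (impl (proves M a (C ∪ C') φ) (proves M a C φ))
  | mp {φ ψ : Fm A} : LiP (impl φ ψ) → LiP φ → LiP ψ
  | nec {φ : Fm A} (M : Msg A) (a : A) (C : Finset A) :
      LiP φ → LiP (proves M a C φ)
  | antiton {a : A} {M M' : Msg A} (C : Finset A) (φ : Fm A) :
      LiP (impl (knows a M) (knows a M')) →
      LiP (impl (proves M' a C φ) (proves M a C φ))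

end Fm

variable {A : Type} [DecidableEq A] [Fintype A] [Nonempty A]

open Fm Msg


section Aux
variable {A : Type} [DecidableEq A]
open Fm Msg

lemma eval_neg (v : Fm A → Bool) (φ : Fm A) : eval v (Fm.neg φ) = !eval v φ := rfl
lemma eval_and (v : Fm A → Bool) (φ ψ : Fm A) :
    eval v (Fm.and φ ψ) = (eval v φ && eval v ψ) := rfl

lemma taut_fst (p q y : Fm A) : Taut (impl (Fm.iff (Fm.and p q) y) (impl y p)) := by
  intro v
  simp only [Fm.impl, Fm.or, Fm.iff, eval_neg, eval_and]
  cases eval v p <;> cases eval v q <;> cases eval v y <;> rfl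

lemma taut_snd (p q y : Fm A) : Taut (impl (Fm.iff (Fm.and p q) y) (impl y q)) := by
  intro v
  simp only [Fm.impl, Fm.or, Fm.iff, eval_neg, eval_and]
  cases eval v p <;> cases eval v q <;> cases eval v y <;> rfl

lemma taut_or_elim (p q r : Fm A) :
    Taut (impl (impl p r) (impl (impl q r) (impl (Fm.or p q) r))) := by
  intro v
  simp only [Fm.impl, Fm.or, Fm.iff, eval_neg, eval_and]
  cases eval v p <;> cases eval v q <;> cases eval v r <;> rfl

end Aux

theorem lip_proof_extension (a : A) (M M' : Msg A) (C : Finset A) (φ : Fm A) :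
    LiP (impl (Fm.or (proves M a C φ) (proves M' a C φ))
      (proves (Msg.pair M M') a C φ)) := by
  have hp := LiP.pairing a M M'
  have h1 : LiP (impl (knows a (Msg.pair M M')) (knows a M)) :=
    LiP.mp (LiP.taut (taut_fst _ _ _)) hp
  have h2 : LiP (impl (knows a (Msg.pair M M')) (knows a M')) :=
    LiP.mp (LiP.taut (taut_snd _ _ _)) hp
  have g1 := LiP.antiton C φ h1
  have g2 := LiP.antiton C φ h2
  exact LiP.mp (LiP.mp (LiP.taut (taut_or_elim _ _ _)) g1) g2
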